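/- Let f : [0,∞) → [0,∞) be a continuous and non-decreasing function, and let x = (x_N)_{N∈ℕ} be a sequence in [0,1). If there exists k ∈ ℕ and infinitely many N ∈ ℕ such that the finite point set x_1,…,x_N has at most k distinct gap lengths, then x does not have f-pair correlations. -/

import Mathlib

open Filter Set Asymptotics

/-- `nid x` is the distance from `x` to the nearest integer. -/
noncomputable def nid (x : ℝ) : ℝ := |x - round x|

/-- `pairCount x s N` is the pair counting function
`R(s,N) = #{(i,j) : 1 ≤ i ≠ j ≤ N, ‖x i - x j‖ ≤ s/N}`. -/
noncomputable def pairCount (x : ℕ → ℝ) (s : ℝ) (N : ℕ) : ℕ :=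
  {p : ℕ × ℕ | 1 ≤ p.1 ∧ p.1 ≤ N ∧ 1 ≤ p.2 ∧ p.2 ≤ N ∧ p.1 ≠ p.2 ∧
      nid (x p.1 - x p.2) ≤ s / N}.ncard

/-- The sequence `x` has `f`-pair correlations:
`R(s,N)/N → f s` for every `s ≥ 0`. -/
def HasPairCorr (x : ℕ → ℝ) (f : ℝ → ℝ) : Prop :=
  ∀ s : ℝ, 0 ≤ s →
    Tendsto (fun N : ℕ => (pairCount x s N : ℝ) / N) atTop (nhds (f s))

/-- Given a (sorted) tuple `y : Fin N → ℝ`, the set of gap lengths: for every `i`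
the torus distance between `y i` and its circular successor `y (i+1 mod N)`. -/
noncomputable def gapLengths {N : ℕ} (y : Fin N → ℝ) : Finset ℝ :=
  Finset.image (fun i : Fin N => nid (y (finRotate N i) - y i)) Finset.univ

/-- The point set `x 1, …, x N` has at most `k` distinct gap lengths: after sorting
the points (by a permutation `σ`), the distances (w.r.t. the torus metric) between
circularly consecutive elements take at most `k` distinct values. -/
noncomputable def AtMostGaps (x : ℕ → ℝ) (N k : ℕ) : Prop :=
  ∃ σ : Equiv.Perm (Fin N), Monotone (fun i : Fin N => x ((σ i : ℕ) + 1)) ∧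
    (gapLengths (fun i : Fin N => x ((σ i : ℕ) + 1))).card ≤ k

lemma nid_nonneg (x : ℝ) : 0 ≤ nid x := abs_nonneg _

lemma nid_le_abs (x : ℝ) : nid x ≤ |x| := by simpa [nid] using round_le x 0

lemma nid_neg (x : ℝ) : nid (-x) = nid x := by
  apply le_antisymm
  · calc nid (-x) ≤ |(-x) - (-(round x) : ℤ)| := round_le (-x) _
    _ = nid x := by rw [nid]; push_cast; rw [← abs_neg]; ring_nf
  · calc nid x ≤ |x - (-(round (-x)) : ℤ)| := round_le x _
    _ = nid (-x) := by rw [nid]; push_cast; rw [← abs_neg]; ring_nf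

lemma nid_add_one (x : ℝ) : nid (x + 1) = nid x := by
  have : round (x + (1:ℤ)) = round x + 1 := round_add_intCast x 1
  rw [nid, nid]
  push_cast at this
  rw [this]
  push_cast
  ring_nf

lemma nid_eq_zero (x : ℝ) (h : |x| < 1) : nid x = 0 ↔ x = 0 := by
  constructor
  · intro h0
    have : x = (round x : ℝ) := by
      have := abs_eq_zero.mp h0; linarith
    have h2 : |(round x : ℝ)| < 1 := this ▸ h
    have h3 : (|round x| : ℝ) < 1 := by rwa [← Int.cast_abs] at h2 ⊢ <;> exact_mod_cast h2
    have h4 : |round x| < 1 := by exact_mod_cast h3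
    have h5 : round x = 0 := by
      rcases abs_cases (round x) with ⟨he, _⟩ | ⟨he, _⟩ <;> omega
    rw [this, h5, Int.cast_zero]
  · intro h; simp [nid, h]

lemma sum_gaps_le_one {n : ℕ} (y : Fin (n+1) → ℝ) (hmono : Monotone y)
    (h01 : ∀ i, y i ∈ Set.Ico (0:ℝ) 1) :
    ∑ i : Fin (n+1), nid (y (finRotate (n+1) i) - y i) ≤ 1 := by
  have hsum0 : ∑ i : Fin (n+1), (y (finRotate (n+1) i) - y i) = 0 := by
    rw [Finset.sum_sub_distrib]
    rw [Equiv.sum_comp (finRotate (n+1)) y]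
    ring
  have hle : ∀ i : Fin (n+1), nid (y (finRotate (n+1) i) - y i) ≤
      (y (finRotate (n+1) i) - y i) + (if i = Fin.last n then 1 else 0) := by
    intro i
    rw [finRotate_succ_apply]
    by_cases hi : i = Fin.last n
    · simp only [hi, if_pos rfl]
      have h1 := (h01 (Fin.last n + 1)).1
      have h2 := (h01 (Fin.last n + 1)).2
      have h3 := (h01 (Fin.last n)).1
      have h4 := (h01 (Fin.last n)).2
      calc nid (y (Fin.last n + 1) - y (Fin.last n))
          = nid ((y (Fin.last n + 1) - y (Fin.last n)) + 1) := (nid_add_one _).symm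
        _ ≤ |(y (Fin.last n + 1) - y (Fin.last n)) + 1| := nid_le_abs _
        _ = (y (Fin.last n + 1) - y (Fin.last n)) + 1 := by
            rw [abs_of_nonneg]; linarith
    · have hlt : (i:ℕ) + 1 = ((i+1 : Fin (n+1)) : ℕ) := by
        rw [Fin.val_add_one]; simp [hi]
      have hle' : i ≤ i + 1 := by
        rw [Fin.le_def]; omega
      have hd : 0 ≤ y (i+1) - y i := sub_nonneg.mpr (hmono hle')
      simp only [if_neg hi, add_zero]
      calc nid (y (i+1) - y i) ≤ |y (i+1) - y i| := nid_le_abs _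
        _ = y (i+1) - y i := abs_of_nonneg hd
  calc ∑ i : Fin (n+1), nid (y (finRotate (n+1) i) - y i)
      ≤ ∑ i : Fin (n+1), ((y (finRotate (n+1) i) - y i) + (if i = Fin.last n then 1 else 0)) :=
        Finset.sum_le_sum (fun i _ => hle i)
    _ = 1 := by rw [Finset.sum_add_distrib, hsum0, Finset.sum_ite_eq' Finset.univ (Fin.last n)]; simp

lemma card_image_le {n : ℕ} (y : Fin (n+1) → ℝ) (hmono : Monotone y)
    (hM : 2 ≤ (Finset.image y Finset.univ).card) :
    (Finset.image y Finset.univ).card ≤ (Finset.univ.filter (fun i => y (finRotate (n+1) i) ≠ y i)).card := by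
  classical
  have hne : ∀ v ∈ Finset.image y Finset.univ, (Finset.univ.filter (fun i => y i = v)).Nonempty := by
    intro v hv
    obtain ⟨i, _, rfl⟩ := Finset.mem_image.mp hv
    exact ⟨i, by simp⟩
  set φ : ℝ → Fin (n+1) := fun v =>
    if h : (Finset.univ.filter (fun i => y i = v)).Nonempty then (Finset.univ.filter (fun i => y i = v)).max' h
    else 0 with hφ
  have hyφ : ∀ v ∈ Finset.image y Finset.univ, y (φ v) = v := by
    intro v hv
    have h := hne v hv
    have := Finset.max'_mem _ h
    simp only [hφ, dif_pos h]
    simpa using (Finset.mem_filter.mp this).2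
  apply Finset.card_le_card_of_injOn φ
  · intro v hv
    have h := hne v hv
    simp only [Finset.coe_filter, Finset.mem_filter, Finset.mem_univ, true_and, Set.mem_setOf_eq]
    rw [finRotate_succ_apply]
    by_cases hlast : φ v = Fin.last n
    · intro hcon
      -- y (φ v + 1) = y 0 since last + 1 = 0
      have h0 : (Fin.last n + 1 : Fin (n+1)) = 0 := by
        rw [Fin.ext_iff, Fin.val_add_one]; simp
      rw [hlast, h0] at hcon
      -- y 0 = y last = v, so y constant
      have hvlast : y (Fin.last n) = v := by rw [← hlast]; exact hyφ v hv
      have hconst : ∀ i, y i = v := by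
        intro i
        have h1 : y 0 ≤ y i := hmono (Fin.zero_le i)
        have h2 : y i ≤ y (Fin.last n) := hmono (Fin.le_last i)
        rw [hvlast] at h2
        rw [hvlast] at hcon
        linarith
      have : Finset.image y Finset.univ = {v} := by
        apply Finset.eq_singleton_iff_unique_mem.mpr
        constructor
        · exact Finset.mem_image.mpr ⟨0, Finset.mem_univ 0, hconst 0⟩
        · intro w hw
          obtain ⟨i, _, rfl⟩ := Finset.mem_image.mp hw
          exact hconst i
      rw [this] at hM
      simp at hM
    · intro hcon
      -- φ v + 1 is in the filter, contradicting maximality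
      have hmem : φ v + 1 ∈ Finset.univ.filter (fun i => y i = v) := by
        simp only [Finset.mem_filter, Finset.mem_univ, true_and]
        rw [hcon]; exact hyφ v hv
      have h := hne v hv
      have hle : φ v + 1 ≤ (Finset.univ.filter (fun i => y i = v)).max' h := Finset.le_max' _ _ hmem
      have : (Finset.univ.filter (fun i => y i = v)).max' h = φ v := by simp only [hφ, dif_pos h]
      rw [this] at hle
      have hval : ((φ v + 1 : Fin (n+1)) : ℕ) = (φ v : ℕ) + 1 := by
        rw [Fin.val_add_one]; simp [hlast]
      rw [Fin.le_def, hval] at hle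
      omega
  · intro v hv w hw hvw
    rw [← hyφ v hv, ← hyφ w hw, hvw]

lemma pairCount_eq_card (x : ℕ → ℝ) (s : ℝ) (N : ℕ) :
    pairCount x s N = (((Finset.Icc 1 N) ×ˢ (Finset.Icc 1 N)).filter
      (fun p => p.1 ≠ p.2 ∧ nid (x p.1 - x p.2) ≤ s / N)).card := by
  classical
  rw [pairCount, ← Set.ncard_coe_finset]
  congr 1
  ext ⟨a, b⟩
  simp only [Set.mem_setOf_eq, Finset.coe_filter, Finset.mem_product, Finset.mem_Icc,
    Set.mem_setOf_eq]
  tauto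

lemma pairCount_mono (x : ℕ → ℝ) {s s' : ℝ} (h : s ≤ s') (N : ℕ) :
    pairCount x s N ≤ pairCount x s' N := by
  classical
  rw [pairCount_eq_card, pairCount_eq_card]
  apply Finset.card_le_card
  intro p hp
  simp only [Finset.mem_filter] at hp ⊢
  refine ⟨hp.1, hp.2.1, hp.2.2.trans ?_⟩
  rcases Nat.eq_zero_or_pos N with h0 | h0
  · simp [h0]
  · have : (0:ℝ) < N := by exact_mod_cast h0
    gcongr

lemma pairCount_zero_eq (x : ℕ → ℝ) (hx : ∀ n, x n ∈ Set.Ico (0:ℝ) 1) (N : ℕ) :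
    pairCount x 0 N = (((Finset.Icc 1 N) ×ˢ (Finset.Icc 1 N)).filter
      (fun p => p.1 ≠ p.2 ∧ x p.1 = x p.2)).card := by
  classical
  rw [pairCount_eq_card]
  congr 1
  apply Finset.filter_congr
  rintro ⟨a, b⟩ _
  simp only [zero_div]
  constructor
  · rintro ⟨h1, h2⟩
    refine ⟨h1, ?_⟩
    have h0 : nid (x a - x b) = 0 := le_antisymm h2 (nid_nonneg _)
    have habs : |x a - x b| < 1 := by
      have := hx a; have := hx b
      rw [abs_lt]; constructor <;> [skip; skip] <;>
        · simp only [Set.mem_Ico] at *; linarith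
    have := (nid_eq_zero _ habs).mp h0
    linarith
  · rintro ⟨h1, h2⟩
    refine ⟨h1, ?_⟩
    rw [show x a - x b = 0 by linarith, (nid_eq_zero 0 (by norm_num)).mpr rfl]

-- Cauchy–Schwarz counting lemma
lemma cs_count (F : Finset ℕ) (x : ℕ → ℝ) :
    F.card ^ 2 ≤ (F.image x).card *
      (((F ×ˢ F).filter (fun p => p.1 ≠ p.2 ∧ x p.1 = x p.2)).card + F.card) := by
  classical
  set E := (F ×ˢ F).filter (fun p => x p.1 = x p.2) with hE
  have hEcard : E.card = ∑ v ∈ F.image x, ((F.filter (fun a => x a = v)).card) ^ 2 := by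
    rw [Finset.card_eq_sum_card_fiberwise (f := fun p => x p.1) (t := F.image x)]
    · apply Finset.sum_congr rfl
      intro v _
      have : E.filter (fun p => x p.1 = v) =
          (F.filter (fun a => x a = v)) ×ˢ (F.filter (fun a => x a = v)) := by
        ext ⟨a, b⟩
        simp only [hE, Finset.mem_filter, Finset.mem_product]
        constructor
        · rintro ⟨⟨⟨ha, hb⟩, hab⟩, hv⟩
          exact ⟨⟨ha, hv⟩, ⟨hb, by rw [← hab]; exact hv⟩⟩
        · rintro ⟨⟨ha, hv⟩, ⟨hb, hv'⟩⟩
          exact ⟨⟨⟨ha, hb⟩, by rw [hv, hv']⟩, hv⟩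
      rw [this, Finset.card_product, sq]
    · rintro ⟨a, b⟩ hp
      simp only [hE, Finset.mem_coe, Finset.mem_filter, Finset.mem_product] at hp
      exact Finset.mem_image_of_mem x hp.1.1
  have hFcard : F.card = ∑ v ∈ F.image x, (F.filter (fun a => x a = v)).card :=
    Finset.card_eq_sum_card_fiberwise (fun a ha => Finset.mem_image_of_mem x ha)
  have hCS : F.card ^ 2 ≤ (F.image x).card * E.card := by
    rw [hFcard, hEcard]
    calc (∑ v ∈ F.image x, (F.filter (fun a => x a = v)).card) ^ 2
        = (∑ v ∈ F.image x, 1 * (F.filter (fun a => x a = v)).card) ^ 2 := by simp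
      _ ≤ (∑ v ∈ F.image x, 1 ^ 2) * ∑ v ∈ F.image x, ((F.filter (fun a => x a = v)).card) ^ 2 :=
          Finset.sum_mul_sq_le_sq_mul_sq _ _ _
      _ = (F.image x).card * ∑ v ∈ F.image x, ((F.filter (fun a => x a = v)).card) ^ 2 := by simp
  have hsplit : E.card ≤ ((F ×ˢ F).filter (fun p => p.1 ≠ p.2 ∧ x p.1 = x p.2)).card + F.card := by
    have h1 : E.filter (fun p => p.1 ≠ p.2) =
        (F ×ˢ F).filter (fun p => p.1 ≠ p.2 ∧ x p.1 = x p.2) := by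
      rw [hE, Finset.filter_filter]
      apply Finset.filter_congr; intro p _; tauto
    have h2 : (E.filter (fun p => p.1 = p.2)).card ≤ F.card := by
      apply Finset.card_le_card_of_injOn (fun p => p.1)
      · rintro ⟨a, b⟩ hp
        simp only [hE, Finset.mem_coe, Finset.mem_filter, Finset.mem_product] at hp
        exact hp.1.1.1
      · rintro ⟨a, b⟩ ha ⟨c, d⟩ hc h
        simp only [hE, Finset.coe_filter, Set.mem_setOf_eq] at ha hc
        simp only at h
        rw [Prod.ext_iff]
        exact ⟨h, by rw [← ha.2, ← hc.2, h]⟩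
    calc E.card = (E.filter (fun p => p.1 ≠ p.2)).card + (E.filter (fun p => ¬ p.1 ≠ p.2)).card :=
          (Finset.card_filter_add_card_filter_not _).symm
      _ ≤ ((F ×ˢ F).filter (fun p => p.1 ≠ p.2 ∧ x p.1 = x p.2)).card + F.card := by
          rw [h1]
          gcongr
          calc (E.filter (fun p => ¬ p.1 ≠ p.2)).card = (E.filter (fun p => p.1 = p.2)).card := by
                congr 1; apply Finset.filter_congr; intro p _; tauto
            _ ≤ F.card := h2
  calc F.card ^ 2 ≤ (F.image x).card * E.card := hCS
    _ ≤ _ := Nat.mul_le_mul_left _ hsplit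

lemma jump {m : ℕ} (x : ℕ → ℝ) (σ : Equiv.Perm (Fin (m+3))) (v : ℝ)
    (T : Finset (Fin (m+3)))
    (hT : ∀ i ∈ T, nid (x ((σ (finRotate (m+3) i) : ℕ) + 1) - x ((σ i : ℕ) + 1)) = v)
    (s s' : ℝ) (hs' : 0 ≤ s') (h1 : s' < ((m+3 : ℕ) : ℝ) * v) (h2 : ((m+3 : ℕ) : ℝ) * v ≤ s) :
    pairCount x s' (m+3) + 2 * T.card ≤ pairCount x s (m+3) := by
  classical
  have hNpos : (0:ℝ) < ((m+3 : ℕ) : ℝ) := by positivity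
  have hvpos : 0 < v := by
    by_contra h
    push_neg at h
    nlinarith
  have hvs : v ≤ s / ((m+3 : ℕ) : ℝ) := (le_div_iff₀ hNpos).mpr (by nlinarith)
  have hvs' : ¬ (v ≤ s' / ((m+3 : ℕ) : ℝ)) := by
    intro h
    rw [le_div_iff₀ hNpos] at h
    nlinarith
  have hrot_ne : ∀ i : Fin (m+3), finRotate (m+3) i ≠ i := by
    intro i h
    rw [finRotate_succ_apply] at h
    have h0 : i + 1 = i + 0 := by rw [add_zero]; exact h
    have h1 : (1 : Fin (m+3)) = 0 := add_left_cancel h0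
    have h2 : ((1 : Fin (m+3)) : ℕ) = 0 := by rw [h1]; rfl
    simp [Fin.val_one] at h2
  have hrot2_ne : ∀ i : Fin (m+3), finRotate (m+3) (finRotate (m+3) i) ≠ i := by
    intro i h
    rw [finRotate_succ_apply, finRotate_succ_apply] at h
    have h0 : i + (1 + 1) = i + 0 := by rw [add_zero, ← add_assoc]; exact h
    have h1 : (1 + 1 : Fin (m+3)) = 0 := add_left_cancel h0
    have h2 : ((1 + 1 : Fin (m+3)) : ℕ) = 0 := by rw [h1]; rfl
    have h3 : ((1 + 1 : Fin (m+3)) : ℕ) = 2 := by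
      show ((2 : Fin (m+3)) : ℕ) = 2
      rfl
    omega
  have hψinj : Set.InjOn (fun i : Fin (m+3) => ((σ i : ℕ) + 1, (σ (finRotate (m+3) i) : ℕ) + 1))
      ↑T := by
    intro i _ j _ h
    simp only [Prod.mk.injEq] at h
    exact σ.injective (Fin.ext (by omega))
  have hψ'inj : Set.InjOn (fun i : Fin (m+3) => ((σ (finRotate (m+3) i) : ℕ) + 1, (σ i : ℕ) + 1))
      ↑T := by
    intro i _ j _ h
    simp only [Prod.mk.injEq] at h
    exact σ.injective (Fin.ext (by omega))
  set P : Finset (ℕ × ℕ) :=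
    T.image (fun i => ((σ i : ℕ) + 1, (σ (finRotate (m+3) i) : ℕ) + 1)) ∪
    T.image (fun i => ((σ (finRotate (m+3) i) : ℕ) + 1, (σ i : ℕ) + 1)) with hP
  have hdisj : Disjoint
      (T.image (fun i => ((σ i : ℕ) + 1, (σ (finRotate (m+3) i) : ℕ) + 1)))
      (T.image (fun i => ((σ (finRotate (m+3) i) : ℕ) + 1, (σ i : ℕ) + 1))) := by
    rw [Finset.disjoint_left]
    rintro p hp hp'
    obtain ⟨i, _, rfl⟩ := Finset.mem_image.mp hp
    obtain ⟨j, _, hj⟩ := Finset.mem_image.mp hp'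
    simp only [Prod.mk.injEq] at hj
    have e1 : σ (finRotate (m+3) j) = σ i := Fin.ext (by omega)
    have e2 : σ j = σ (finRotate (m+3) i) := Fin.ext (by omega)
    have e1' : finRotate (m+3) j = i := σ.injective e1
    have e2' : j = finRotate (m+3) i := σ.injective e2
    rw [e2'] at e1'
    exact hrot2_ne i e1'
  have hPcard : P.card = 2 * T.card := by
    rw [hP, Finset.card_union_of_disjoint hdisj,
      Finset.card_image_of_injOn hψinj, Finset.card_image_of_injOn hψ'inj]
    ring
  set A := ((Finset.Icc 1 (m+3)) ×ˢ (Finset.Icc 1 (m+3))).filter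
      (fun p : ℕ × ℕ => p.1 ≠ p.2 ∧ nid (x p.1 - x p.2) ≤ s / ((m+3:ℕ):ℝ)) with hA
  set A' := ((Finset.Icc 1 (m+3)) ×ˢ (Finset.Icc 1 (m+3))).filter
      (fun p : ℕ × ℕ => p.1 ≠ p.2 ∧ nid (x p.1 - x p.2) ≤ s' / ((m+3:ℕ):ℝ)) with hA'
  have hmemP : ∀ p ∈ P, p ∈ A ∧ p ∉ A' := by
    intro p hp
    have key : ∀ i ∈ T,
        (((σ i : ℕ) + 1, (σ (finRotate (m+3) i) : ℕ) + 1) ∈ A ∧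
         ((σ i : ℕ) + 1, (σ (finRotate (m+3) i) : ℕ) + 1) ∉ A') ∧
        (((σ (finRotate (m+3) i) : ℕ) + 1, (σ i : ℕ) + 1) ∈ A ∧
         ((σ (finRotate (m+3) i) : ℕ) + 1, (σ i : ℕ) + 1) ∉ A') := by
      intro i hi
      have hv1 : nid (x ((σ (finRotate (m+3) i) : ℕ) + 1) - x ((σ i : ℕ) + 1)) = v := hT i hi
      have hv2 : nid (x ((σ i : ℕ) + 1) - x ((σ (finRotate (m+3) i) : ℕ) + 1)) = v := by
        rw [← hv1, ← nid_neg]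
        ring_nf
      have hne : (σ i : ℕ) + 1 ≠ (σ (finRotate (m+3) i) : ℕ) + 1 := by
        intro h
        exact hrot_ne i (σ.injective (Fin.ext (by omega)))
      have hb1 : (σ i : ℕ) + 1 ∈ Finset.Icc 1 (m+3) := by
        simp only [Finset.mem_Icc]
        exact ⟨by omega, by have := (σ i).isLt; omega⟩
      have hb2 : (σ (finRotate (m+3) i) : ℕ) + 1 ∈ Finset.Icc 1 (m+3) := by
        simp only [Finset.mem_Icc]
        exact ⟨by omega, by have := (σ (finRotate (m+3) i)).isLt; omega⟩
      refine ⟨⟨?_, ?_⟩, ?_, ?_⟩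
      · rw [hA]
        simp only [Finset.mem_filter, Finset.mem_product]
        exact ⟨⟨hb1, hb2⟩, hne, by rw [hv2]; exact hvs⟩
      · rw [hA']
        simp only [Finset.mem_filter, Finset.mem_product, not_and]
        intro _ _
        rw [hv2]
        exact hvs'
      · rw [hA]
        simp only [Finset.mem_filter, Finset.mem_product]
        exact ⟨⟨hb2, hb1⟩, Ne.symm hne, by rw [hv1]; exact hvs⟩
      · rw [hA']
        simp only [Finset.mem_filter, Finset.mem_product, not_and]
        intro _ _
        rw [hv1]
        exact hvs'
    rw [hP, Finset.mem_union] at hp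
    rcases hp with hp | hp
    · obtain ⟨i, hi, rfl⟩ := Finset.mem_image.mp hp
      exact (key i hi).1
    · obtain ⟨i, hi, rfl⟩ := Finset.mem_image.mp hp
      exact (key i hi).2
  have hsub : A' ∪ P ⊆ A := by
    intro p hp
    rcases Finset.mem_union.mp hp with hp | hp
    · rw [hA'] at hp
      rw [hA]
      simp only [Finset.mem_filter] at hp ⊢
      refine ⟨hp.1, hp.2.1, hp.2.2.trans ?_⟩
      have hss : s' ≤ s := by nlinarith
      gcongr
    · exact (hmemP p hp).1
  have hdisj2 : Disjoint A' P := by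
    rw [Finset.disjoint_left]
    intro p hp hp'
    exact (hmemP p hp').2 hp
  calc pairCount x s' (m+3) + 2 * T.card = A'.card + P.card := by
        rw [pairCount_eq_card, hPcard]
    _ = (A' ∪ P).card := (Finset.card_union_of_disjoint hdisj2).symm
    _ ≤ A.card := Finset.card_le_card hsub
    _ = pairCount x s (m+3) := (pairCount_eq_card x s (m+3)).symm

lemma key (x : ℕ → ℝ) (hx : ∀ n, x n ∈ Set.Ico (0:ℝ) 1) (k m : ℕ) (hk : 1 ≤ k)
    (B : ℝ) (hB : 1 ≤ B) (hNB : B + 2 ≤ ((m+3 : ℕ) : ℝ))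
    (hgap : AtMostGaps x (m+3) k)
    (h0 : (pairCount x 0 (m+3) : ℝ) ≤ B * ((m+3 : ℕ) : ℝ)) :
    ∃ a : ℝ, 0 < a ∧ a ≤ (k : ℝ) * (B+2) ∧ ∀ s s' : ℝ, 0 ≤ s' → s' < a → a ≤ s →
      (pairCount x s' (m+3) : ℝ) + 2 * (((m+3 : ℕ) : ℝ) / ((k : ℝ) * (B+2))) ≤
        pairCount x s (m+3) := by
  classical
  obtain ⟨σ, hmono, hcard⟩ := hgap
  set y : Fin (m+3) → ℝ := fun i => x ((σ i : ℕ) + 1) with hy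
  set g : Fin (m+3) → ℝ := fun i => nid (y (finRotate (m+3) i) - y i) with hg
  set NR : ℝ := ((m+3 : ℕ) : ℝ) with hNR
  have hNRpos : 0 < NR := by positivity
  set K : ℝ := (k : ℝ) * (B + 2) with hK
  have hKpos : 0 < K := by
    have : (1:ℝ) ≤ (k:ℝ) := by exact_mod_cast hk
    nlinarith
  have hy01 : ∀ i, y i ∈ Set.Ico (0:ℝ) 1 := fun i => hx _
  have habs : ∀ i j : Fin (m+3), |y i - y j| < 1 := by
    intro i j
    have h1 := (hy01 i).1; have h2 := (hy01 i).2
    have h3 := (hy01 j).1; have h4 := (hy01 j).2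
    rw [abs_lt]; constructor <;> linarith
  -- Step 1: find a popular positive gap value
  have step1 : ∃ v ∈ gapLengths y, v ≠ 0 ∧
      NR / K ≤ ((Finset.univ.filter (fun i => g i = v)).card : ℝ) := by
    by_contra hcon
    push_neg at hcon
    set T := Finset.univ.filter (fun i : Fin (m+3) => y (finRotate (m+3) i) ≠ y i) with hT
    have hTsub : T ⊆ ((gapLengths y).erase 0).biUnion
        (fun v => Finset.univ.filter (fun i => g i = v)) := by
      intro i hi
      rw [hT, Finset.mem_filter] at hi
      rw [Finset.mem_biUnion]
      refine ⟨g i, ?_, by simp⟩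
      rw [Finset.mem_erase]
      constructor
      · intro hgi0
        exact hi.2 (by
          have := (nid_eq_zero _ (habs (finRotate (m+3) i) i)).mp hgi0
          linarith)
      · exact Finset.mem_image_of_mem _ (Finset.mem_univ i)
    have hTcard : (T.card : ℝ) ≤ NR / (B + 2) := by
      have h1 : T.card ≤ ∑ v ∈ (gapLengths y).erase 0,
          (Finset.univ.filter (fun i => g i = v)).card :=
        le_trans (Finset.card_le_card hTsub) (Finset.card_biUnion_le)
      have h2 : (∑ v ∈ (gapLengths y).erase 0,
          ((Finset.univ.filter (fun i => g i = v)).card : ℝ)) ≤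
          ((gapLengths y).erase 0).card * (NR / K) := by
        rw [← nsmul_eq_mul]
        apply Finset.sum_le_card_nsmul
        intro v hv
        rw [Finset.mem_erase] at hv
        exact (hcon v hv.2 hv.1).le
      have h3 : (((gapLengths y).erase 0).card : ℝ) ≤ (k : ℝ) := by
        exact_mod_cast le_trans (Finset.card_erase_le) hcard
      have h4 : ((T.card : ℝ)) ≤ ∑ v ∈ (gapLengths y).erase 0,
          ((Finset.univ.filter (fun i => g i = v)).card : ℝ) := by
        exact_mod_cast h1
      have h5 : (((gapLengths y).erase 0).card : ℝ) * (NR / K) ≤ (k : ℝ) * (NR / K) := by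
        apply mul_le_mul_of_nonneg_right h3
        positivity
      have h6 : (k : ℝ) * (NR / K) = NR / (B + 2) := by
        rw [hK]
        field_simp
      linarith
    set M := (Finset.image y Finset.univ).card with hM
    have hM1 : 1 ≤ M := by
      rw [hM]
      apply Finset.card_pos.mpr
      exact ⟨y 0, Finset.mem_image_of_mem _ (Finset.mem_univ 0)⟩
    have hMle : (M : ℝ) ≤ NR / (B + 2) := by
      rcases le_or_gt 2 M with h2M | h2M
      · calc (M:ℝ) ≤ (T.card : ℝ) := by exact_mod_cast card_image_le y hmono h2M
          _ ≤ NR / (B + 2) := hTcard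
      · have : M = 1 := by omega
        rw [this]
        rw [le_div_iff₀ (by linarith : (0:ℝ) < B + 2)]
        push_cast
        linarith
    -- Cauchy–Schwarz contradiction
    have hF : Finset.Icc 1 (m+3) = Finset.image (fun i : Fin (m+3) => (σ i : ℕ) + 1)
        Finset.univ := by
      apply Finset.ext
      intro a
      simp only [Finset.mem_Icc, Finset.mem_image, Finset.mem_univ, true_and]
      constructor
      · rintro ⟨h1, h2⟩
        refine ⟨σ.symm ⟨a - 1, by omega⟩, ?_⟩
        rw [Equiv.apply_symm_apply]
        simp
        omega
      · rintro ⟨i, rfl⟩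
        exact ⟨by omega, by have := (σ i).isLt; omega⟩
    have hFim : (Finset.Icc 1 (m+3)).image x = Finset.image y Finset.univ := by
      rw [hF, Finset.image_image]
      rfl
    have hcs := cs_count (Finset.Icc 1 (m+3)) x
    rw [hFim, Nat.card_Icc, Nat.add_sub_cancel] at hcs
    have hcsR : (NR : ℝ) ^ 2 ≤ (M : ℝ) * ((pairCount x 0 (m+3) : ℝ) + NR) := by
      rw [pairCount_zero_eq x hx (m+3), hNR, hM]
      exact_mod_cast hcs
    have hMB : (M : ℝ) * (B + 2) ≤ NR := by
      rw [le_div_iff₀ (by linarith : (0:ℝ) < B + 2)] at hMle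
      exact hMle
    have hM1R : (1:ℝ) ≤ (M:ℝ) := by exact_mod_cast hM1
    nlinarith [hcsR, hMB, hM1R, h0, hNRpos]
  obtain ⟨v, hvmem, hvne, hvcard⟩ := step1
  have hvpos : 0 < v := by
    obtain ⟨i, _, hi⟩ := Finset.mem_image.mp hvmem
    have := nid_nonneg (y (finRotate (m+3) i) - y i)
    rcases lt_or_eq_of_le (hi ▸ this) with h | h
    · exact h
    · exact absurd h.symm hvne
  set T := Finset.univ.filter (fun i : Fin (m+3) => g i = v) with hT
  have hTpos : (0:ℝ) < (T.card : ℝ) := lt_of_lt_of_le (by positivity) hvcard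
  have hsum : (T.card : ℝ) * v ≤ 1 := by
    have h1 : ∑ i ∈ T, g i = (T.card : ℝ) * v := by
      rw [Finset.sum_congr rfl (fun i hi => (Finset.mem_filter.mp hi).2), Finset.sum_const,
        nsmul_eq_mul]
    have h2 : ∑ i ∈ T, g i ≤ ∑ i : Fin (m+3), g i := by
      apply Finset.sum_le_sum_of_subset_of_nonneg (Finset.subset_univ T)
      intro i _ _
      exact nid_nonneg _
    have h3 : ∑ i : Fin (m+3), g i ≤ 1 := sum_gaps_le_one y hmono hy01
    linarith
  refine ⟨NR * v, by positivity, ?_, ?_⟩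
  · -- NR * v ≤ K
    have h1 : NR ≤ K * (T.card : ℝ) := by
      rw [div_le_iff₀ hKpos] at hvcard
      linarith [hvcard]
    nlinarith [h1, hsum, hvpos, hKpos, hTpos]
  · intro s s' hs' h1 h2
    have hj := jump x σ v T (fun i hi => (Finset.mem_filter.mp hi).2) s s' hs' h1 h2
    have hjR : (pairCount x s' (m+3) : ℝ) + 2 * (T.card : ℝ) ≤ (pairCount x s (m+3) : ℝ) := by
      exact_mod_cast hj
    have : NR / K ≤ (T.card : ℝ) := hvcard
    linarith

/-- If `f : [0,∞) → [0,∞)` is continuous and non-decreasing and the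
sequence `x` in `[0,1)` is such that for some `k` and infinitely many `N` the point set
`x 1, …, x N` has at most `k` distinct gap lengths, then `x` does not have
`f`-pair correlations. -/
theorem statement0 (f : ℝ → ℝ) (hf_nonneg : ∀ s : ℝ, 0 ≤ s → 0 ≤ f s)
    (hf_cont : ContinuousOn f (Ici 0)) (hf_mono : MonotoneOn f (Ici 0))
    (x : ℕ → ℝ) (hx : ∀ n, x n ∈ Ico (0 : ℝ) 1) (k : ℕ)
    (hgap : {N : ℕ | AtMostGaps x N k}.Infinite) :
    ¬ HasPairCorr x f := by
  classical
  intro hpc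
  -- k must be positive
  have hk : 1 ≤ k := by
    by_contra hk0
    push_neg at hk0
    interval_cases k
    apply hgap
    apply Set.Finite.subset (Set.finite_singleton 0)
    intro N hN
    simp only [Set.mem_singleton_iff]
    by_contra hN0
    obtain ⟨σ, _, hcard⟩ := hN
    have hne : (gapLengths (fun i : Fin N => x ((σ i : ℕ) + 1))).Nonempty := by
      have hpos : 0 < N := Nat.pos_of_ne_zero hN0
      haveI : NeZero N := ⟨hN0⟩
      exact ⟨_, Finset.mem_image_of_mem _ (Finset.mem_univ (0 : Fin N))⟩
    rw [Nat.le_zero, Finset.card_eq_zero] at hcard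
    rw [hcard] at hne
    exact Finset.not_nonempty_empty hne
  set B : ℝ := f 0 + 1 with hB'
  have hB : 1 ≤ B := by
    have := hf_nonneg 0 le_rfl
    rw [hB']; linarith
  set K : ℝ := (k : ℝ) * (B + 2) with hK
  have hKpos : 0 < K := by
    have : (1:ℝ) ≤ (k:ℝ) := by exact_mod_cast hk
    rw [hK]; nlinarith
  -- eventual bound on pairCount at 0
  have hev : ∀ᶠ N in atTop, (pairCount x 0 N : ℝ) / N < B := by
    apply (hpc 0 le_rfl).eventually_lt_const
    rw [hB']; linarith
  obtain ⟨N₁, hN₁⟩ := eventually_atTop.mp hev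
  -- choose the sequence of good N's
  have hchoice : ∀ j : ℕ, ∃ N, N ∈ {N : ℕ | AtMostGaps x N k} ∧
      j + N₁ + ⌈B + 2⌉₊ + 3 < N := by
    intro j
    obtain ⟨N, hN, hlt⟩ := hgap.exists_gt (j + N₁ + ⌈B + 2⌉₊ + 3)
    exact ⟨N, hN, hlt⟩
  set Nf : ℕ → ℕ := fun j => (hchoice j).choose with hNf
  have hNf_mem : ∀ j, AtMostGaps x (Nf j) k := fun j => (hchoice j).choose_spec.1
  have hNf_gt : ∀ j, j + N₁ + ⌈B + 2⌉₊ + 3 < Nf j := fun j => (hchoice j).choose_spec.2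
  have hNf_ge_j : ∀ j, j ≤ Nf j := fun j => by have := hNf_gt j; omega
  have hNf_pos : ∀ j, 0 < Nf j := fun j => by have := hNf_gt j; omega
  -- key applied to each j
  have hkey : ∀ j : ℕ, ∃ a : ℝ, 0 < a ∧ a ≤ K ∧ ∀ s s' : ℝ, 0 ≤ s' → s' < a → a ≤ s →
      (pairCount x s' (Nf j) : ℝ) + 2 * ((Nf j : ℝ) / K) ≤ pairCount x s (Nf j) := by
    intro j
    have hm : Nf j - 3 + 3 = Nf j := by have := hNf_gt j; omega
    have hNB : B + 2 ≤ ((Nf j - 3 + 3 : ℕ) : ℝ) := by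
      rw [hm]
      calc B + 2 ≤ (⌈B + 2⌉₊ : ℝ) := Nat.le_ceil _
        _ ≤ (Nf j : ℝ) := by
          have := hNf_gt j
          exact_mod_cast by omega
    have hgap' : AtMostGaps x (Nf j - 3 + 3) k := by rw [hm]; exact hNf_mem j
    have h0 : (pairCount x 0 (Nf j - 3 + 3) : ℝ) ≤ B * ((Nf j - 3 + 3 : ℕ) : ℝ) := by
      rw [hm]
      have h1 : N₁ ≤ Nf j := by have := hNf_gt j; omega
      have h2 := hN₁ (Nf j) h1
      have h3 : (0:ℝ) < (Nf j : ℝ) := by exact_mod_cast hNf_pos j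
      rw [div_lt_iff₀ h3] at h2
      linarith
    have := key x hx k (Nf j - 3) hk B hB hNB hgap' h0
    rw [hm] at this
    exact this
  set a : ℕ → ℝ := fun j => (hkey j).choose with ha
  have ha_pos : ∀ j, 0 < a j := fun j => (hkey j).choose_spec.1
  have ha_le : ∀ j, a j ≤ K := fun j => (hkey j).choose_spec.2.1
  have ha_jump : ∀ j, ∀ s s' : ℝ, 0 ≤ s' → s' < a j → a j ≤ s →
      (pairCount x s' (Nf j) : ℝ) + 2 * ((Nf j : ℝ) / K) ≤ pairCount x s (Nf j) :=
    fun j => (hkey j).choose_spec.2.2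
  -- Bolzano-Weierstrass
  have hmem : ∀ j, a j ∈ Set.Icc (0:ℝ) K := fun j => ⟨(ha_pos j).le, ha_le j⟩
  obtain ⟨a₀, ha₀mem, φ, hφmono, hφtend⟩ := (isCompact_Icc).tendsto_subseq hmem
  have ha₀ : 0 ≤ a₀ := ha₀mem.1
  -- the subsequence of N's tends to infinity
  have hNtend : Tendsto (fun j => Nf (φ j)) atTop atTop := by
    apply tendsto_atTop_mono (fun j => ?_) tendsto_id
    calc id j = j := rfl
      _ ≤ φ j := hφmono.le_apply
      _ ≤ Nf (φ j) := hNf_ge_j _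
  -- main inequality for every ε > 0
  have main : ∀ ε : ℝ, 0 < ε → f (max (a₀ - ε) 0) + 2 / K ≤ f (a₀ + ε) := by
    intro ε hε
    set s := a₀ + ε with hs
    set s' := max (a₀ - ε) 0 with hs'
    have hs0 : 0 ≤ s := by rw [hs]; linarith
    have hs'0 : 0 ≤ s' := le_max_right _ _
    have L1 : Tendsto (fun j => (pairCount x s (Nf (φ j)) : ℝ) / (Nf (φ j))) atTop
        (nhds (f s)) := (hpc s hs0).comp hNtend
    have L2 : Tendsto (fun j => (pairCount x s' (Nf (φ j)) : ℝ) / (Nf (φ j))) atTop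
        (nhds (f s')) := (hpc s' hs'0).comp hNtend
    have hevj : ∀ᶠ j in atTop, (pairCount x s' (Nf (φ j)) : ℝ) / (Nf (φ j)) + 2 / K ≤
        (pairCount x s (Nf (φ j)) : ℝ) / (Nf (φ j)) := by
      have h1 : ∀ᶠ j in atTop, a (φ j) < a₀ + ε := by
        have := hφtend.eventually (eventually_lt_nhds (by linarith : a₀ < a₀ + ε))
        exact this
      have h2 : ∀ᶠ j in atTop, a₀ - ε < a (φ j) := by
        have := hφtend.eventually (eventually_gt_nhds (by linarith : a₀ - ε < a₀))
        exact this
      filter_upwards [h1, h2] with j hj1 hj2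
      have hlt : s' < a (φ j) := by
        rw [hs']
        apply max_lt hj2 (ha_pos (φ j))
      have hle : a (φ j) ≤ s := hj1.le
      have := ha_jump (φ j) s s' hs'0 hlt hle
      have hNpos : (0:ℝ) < ((Nf (φ j) : ℕ) : ℝ) := by exact_mod_cast hNf_pos (φ j)
      have heq : (pairCount x s' (Nf (φ j)) : ℝ) / (Nf (φ j)) + 2 / K
          = ((pairCount x s' (Nf (φ j)) : ℝ) + 2 * ((Nf (φ j) : ℝ) / K)) / (Nf (φ j)) := by
        have hK0 : K ≠ 0 := ne_of_gt hKpos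
        have hN0 : ((Nf (φ j)) : ℝ) ≠ 0 := ne_of_gt hNpos
        field_simp
      rw [heq]
      gcongr
    have := le_of_tendsto_of_tendsto (L2.add tendsto_const_nhds) L1 hevj
    exact this
  -- take ε → 0 along 1/(n+1)
  have hcw : ContinuousWithinAt f (Ici 0) a₀ := hf_cont a₀ ha₀
  have heps : Tendsto (fun n : ℕ => 1 / ((n:ℝ) + 1)) atTop (nhds 0) :=
    tendsto_one_div_add_atTop_nhds_zero_nat
  have hW : Tendsto (fun n : ℕ => f (a₀ + 1 / ((n:ℝ) + 1))) atTop (nhds (f a₀)) := by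
    apply hcw.tendsto.comp
    apply tendsto_nhdsWithin_of_tendsto_nhds_of_eventually_within
    · have : Tendsto (fun n : ℕ => a₀ + 1 / ((n:ℝ) + 1)) atTop (nhds (a₀ + 0)) :=
        tendsto_const_nhds.add heps
      simpa using this
    · filter_upwards with n
      have : (0:ℝ) < 1 / ((n:ℝ) + 1) := by positivity
      simp only [Set.mem_Ici]
      linarith
  have hU : Tendsto (fun n : ℕ => f (max (a₀ - 1 / ((n:ℝ) + 1)) 0)) atTop (nhds (f a₀)) := by
    apply hcw.tendsto.comp
    apply tendsto_nhdsWithin_of_tendsto_nhds_of_eventually_within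
    · have h1 : Tendsto (fun n : ℕ => max (a₀ - 1 / ((n:ℝ) + 1)) 0) atTop
          (nhds (max (a₀ - 0) 0)) := (tendsto_const_nhds.sub heps).max tendsto_const_nhds
      have : max (a₀ - 0) 0 = a₀ := by rw [sub_zero, max_eq_left ha₀]
      rwa [this] at h1
    · filter_upwards with n
      simp only [Set.mem_Ici]
      exact le_max_right _ _
  have hfinal : f a₀ + 2 / K ≤ f a₀ := by
    apply le_of_tendsto_of_tendsto (hU.add tendsto_const_nhds) hW
    filter_upwards with n
    exact main (1 / ((n:ℝ) + 1)) (by positivity)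
  have : 0 < 2 / K := by positivity
  linarith
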